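/- Let L be a language with a unary connective ¬ and binary connectives ∨ and ∧, F the set of all wffs of L, and ⟨F, 𝒱, ⊨⟩ a semantic structure satisfying (A3) and (A1). Let |~ be a relation on P(F) × F. Then |~ is a coherency preserving pivotal-discriminative consequence relation if and only if |~ satisfies conditions (|~0), (|~6), (|~7), (|~8), (|~10), and (|~11). -/

import Mathlib

/-- The set of models of a set of formulas `Γ`. -/
def modSet {F V : Type*} (sat : V → F → Prop) (Γ : Set F) : Set V :=
  {v | ∀ α ∈ Γ, sat v α}

/-- The set of formulas satisfied in every valuation of `S`. -/
def thSet {F V : Type*} (sat : V → F → Prop) (S : Set V) : Set F :=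
  {α | S ⊆ modSet sat {α}}

/-- `D`: the family of definable sets of valuations. -/
def defFam {F V : Type*} (sat : V → F → Prop) : Set (Set V) :=
  {S | ∃ Γ : Set F, modSet sat Γ = S}

/-- The basic consequence operator `C_⊢(Γ) = Th(Mod(Γ))`. -/
def cnsq {F V : Type*} (sat : V → F → Prop) (Γ : Set F) : Set F :=
  thSet sat (modSet sat Γ)

/-- `C_|~(Γ) = {α | Γ |~ α}`. -/
def relC {F : Type*} (rel : Set F → F → Prop) (Γ : Set F) : Set F :=
  {α | rel Γ α}

/-- `𝐂`: the sets of valuations that do not satisfy both a formula and its negation. -/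
def coFam {F V : Type*} (sat : V → F → Prop) (neg : F → F) : Set (Set V) :=
  {S | ∀ α, ¬(S ⊆ modSet sat {α} ∧ S ⊆ modSet sat {neg α})}

/-- `Γ` is consistent: for no `α` do we have both `Γ ⊢ α` and `Γ ⊢ ¬α`. -/
def isConsistent {F V : Type*} (sat : V → F → Prop) (neg : F → F) (Γ : Set F) : Prop :=
  ∀ α, ¬(modSet sat Γ ⊆ modSet sat {α} ∧ modSet sat Γ ⊆ modSet sat {neg α})

/-- One step of the inductive construction of the sets `H_i(Γ)`:
`hStep … Γ B = {¬β : β ∈ C_⊢(B) \ C_|~(Γ) and ¬β ∉ C_⊢(B)}`. -/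
def hStep {F V : Type*} (sat : V → F → Prop) (neg : F → F)
    (rel : Set F → F → Prop) (Γ B : Set F) : Set F :=
  {x | ∃ β, x = neg β ∧ β ∈ cnsq sat B ∧ β ∉ relC rel Γ ∧ neg β ∉ cnsq sat B}

/-- `hPrev … Γ n = Γ ∪ C_|~(Γ) ∪ H_1(Γ) ∪ … ∪ H_n(Γ)`. -/
def hPrev {F V : Type*} (sat : V → F → Prop) (neg : F → F)
    (rel : Set F → F → Prop) (Γ : Set F) : ℕ → Set F
  | 0 => Γ ∪ relC rel Γ
  | n + 1 => hPrev sat neg rel Γ n ∪ hStep sat neg rel Γ (hPrev sat neg rel Γ n)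

/-- `H(Γ) = ⋃_{i ≥ 1} H_i(Γ)`, where `H_{n+1}(Γ) = hStep … Γ (hPrev … Γ n)`. -/
def hSet {F V : Type*} (sat : V → F → Prop) (neg : F → F)
    (rel : Set F → F → Prop) (Γ : Set F) : Set F :=
  ⋃ n : ℕ, hStep sat neg rel Γ (hPrev sat neg rel Γ n)

/-- Assumption `(A2)`. -/
def assumpA2 {F V : Type*} (sat : V → F → Prop) (neg : F → F) : Prop :=
  ∀ (Γ : Set F) (α : F), α ∉ cnsq sat Γ → neg α ∉ cnsq sat Γ →
    ¬(modSet sat Γ ∩ modSet sat {α} ⊆ modSet sat {neg α})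

/-- Assumption `(A3)`. -/
def assumpA3 {F V : Type*} (sat : V → F → Prop) (neg : F → F)
    (disj conj : F → F → F) : Prop :=
  ∀ α β : F,
    modSet sat {disj α β} = modSet sat {α} ∪ modSet sat {β} ∧
    modSet sat {conj α β} = modSet sat {α} ∩ modSet sat {β} ∧
    modSet sat {neg (neg α)} = modSet sat {α} ∧
    modSet sat {neg (disj α β)} = modSet sat {conj (neg α) (neg β)} ∧
    modSet sat {neg (conj α β)} = modSet sat {disj (neg α) (neg β)}

/-- Condition `(|~0)`. -/
def cond0 {F V : Type*} (sat : V → F → Prop) (rel : Set F → F → Prop) : Prop :=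
  ∀ Γ Δ : Set F, cnsq sat Γ = cnsq sat Δ → relC rel Γ = relC rel Δ

/-- Condition `(|~6)`. -/
def cond6 {F V : Type*} (sat : V → F → Prop) (neg : F → F)
    (rel : Set F → F → Prop) : Prop :=
  ∀ (Γ : Set F) (α β : F),
    β ∈ cnsq sat (Γ ∪ relC rel Γ) → β ∉ relC rel Γ →
    neg α ∈ cnsq sat (Γ ∪ relC rel Γ ∪ {neg β}) → α ∉ relC rel Γ

/-- Condition `(|~7)`. -/
def cond7 {F V : Type*} (sat : V → F → Prop) (neg : F → F) (disj : F → F → F)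
    (rel : Set F → F → Prop) : Prop :=
  ∀ (Γ : Set F) (α β : F),
    α ∈ cnsq sat (Γ ∪ relC rel Γ) → α ∉ relC rel Γ →
    β ∈ cnsq sat (Γ ∪ relC rel Γ ∪ {neg α}) → β ∉ relC rel Γ →
    disj α β ∉ relC rel Γ

/-- Condition `(|~8)`. -/
def cond8 {F V : Type*} (sat : V → F → Prop) (neg : F → F)
    (rel : Set F → F → Prop) : Prop :=
  ∀ (Γ : Set F) (α : F), α ∈ relC rel Γ → neg α ∉ cnsq sat (Γ ∪ relC rel Γ)

/-- Condition `(|~9)`. -/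
def cond9 {F V : Type*} (sat : V → F → Prop) (neg : F → F)
    (rel : Set F → F → Prop) : Prop :=
  ∀ Γ Δ : Set F, relC rel Γ ∪ hSet sat neg rel Γ ⊆
    cnsq sat (Δ ∪ relC rel Δ ∪ hSet sat neg rel Δ ∪ Γ)

/-- Condition `(|~10)`. -/
def cond10 {F V : Type*} (sat : V → F → Prop) (neg : F → F)
    (rel : Set F → F → Prop) : Prop :=
  ∀ Γ : Set F, isConsistent sat neg Γ →
    isConsistent sat neg (relC rel Γ) ∧ Γ ⊆ relC rel Γ ∧
      cnsq sat (relC rel Γ) = relC rel Γ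

/-- Condition `(|~11)`. -/
def cond11 {F V : Type*} (sat : V → F → Prop) (neg : F → F)
    (rel : Set F → F → Prop) : Prop :=
  ∀ Γ : Set F, cnsq sat (Γ ∪ relC rel Γ ∪ hSet sat neg rel Γ) =
    thSet sat {v ∈ modSet sat Γ | ∀ Δ : Set F, v ∈ modSet sat Δ →
      v ∈ modSet sat (relC rel Δ ∪ hSet sat neg rel Δ)}

/-- Condition `(|~12)`. -/
def cond12 {F V : Type*} (sat : V → F → Prop) (neg : F → F)
    (rel : Set F → F → Prop) : Prop :=
  Set.univ \ {v : V | ∀ Δ : Set F, v ∈ modSet sat Δ →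
    v ∈ modSet sat (relC rel Δ ∪ hSet sat neg rel Δ)} ∈ defFam sat

/-! ### Auxiliary lemmas -/

section SDAux

variable {F V : Type*}

lemma sd_mem_modSet_singleton {sat : V → F → Prop} {v : V} {α : F} :
    v ∈ modSet sat {α} ↔ sat v α := by
  simp [modSet]

lemma sd_modSet_anti {sat : V → F → Prop} {Γ Δ : Set F} (h : Γ ⊆ Δ) :
    modSet sat Δ ⊆ modSet sat Γ :=
  fun _ hv α hα => hv α (h hα)

lemma sd_modSet_union (sat : V → F → Prop) (Γ Δ : Set F) :
    modSet sat (Γ ∪ Δ) = modSet sat Γ ∩ modSet sat Δ := by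
  ext v
  simp only [modSet, Set.mem_setOf_eq, Set.mem_union, Set.mem_inter_iff]
  exact ⟨fun h => ⟨fun a ha => h a (Or.inl ha), fun a ha => h a (Or.inr ha)⟩,
    fun ⟨h1, h2⟩ a ha => ha.elim (h1 a) (h2 a)⟩

lemma sd_modSet_iUnion (sat : V → F → Prop) (T : ℕ → Set F) :
    modSet sat (⋃ n, T n) = ⋂ n, modSet sat (T n) := by
  ext v
  simp only [modSet, Set.mem_setOf_eq, Set.mem_iUnion, Set.mem_iInter]
  exact ⟨fun h n α ha => h α ⟨n, ha⟩, fun h α ⟨n, ha⟩ => h n α ha⟩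

lemma sd_mem_cnsq {sat : V → F → Prop} {Γ : Set F} {α : F} :
    α ∈ cnsq sat Γ ↔ modSet sat Γ ⊆ modSet sat {α} := Iff.rfl

lemma sd_mem_thSet {sat : V → F → Prop} {S : Set V} {α : F} :
    α ∈ thSet sat S ↔ S ⊆ modSet sat {α} := Iff.rfl

lemma sd_subset_cnsq (sat : V → F → Prop) (Γ : Set F) : Γ ⊆ cnsq sat Γ :=
  fun _ hα => sd_mem_cnsq.2 (sd_modSet_anti (Set.singleton_subset_iff.2 hα))

lemma sd_modSet_cnsq (sat : V → F → Prop) (Γ : Set F) :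
    modSet sat (cnsq sat Γ) = modSet sat Γ := by
  refine subset_antisymm (sd_modSet_anti (sd_subset_cnsq sat Γ)) ?_
  intro v hv α hα
  exact sd_mem_modSet_singleton.mp (hα hv)

lemma sd_cnsq_congr {sat : V → F → Prop} {Γ Δ : Set F}
    (h : modSet sat Γ = modSet sat Δ) : cnsq sat Γ = cnsq sat Δ := by
  unfold cnsq; rw [h]

lemma sd_mod_disj {sat : V → F → Prop} {neg : F → F} {disj conj : F → F → F}
    (hA3 : assumpA3 sat neg disj conj) (α β : F) :
    modSet sat {disj α β} = modSet sat {α} ∪ modSet sat {β} := (hA3 α β).1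

lemma sd_mod_neg_disj {sat : V → F → Prop} {neg : F → F} {disj conj : F → F → F}
    (hA3 : assumpA3 sat neg disj conj) (α β : F) :
    modSet sat {neg (disj α β)} = modSet sat {neg α} ∩ modSet sat {neg β} := by
  rw [(hA3 α β).2.2.2.1, (hA3 (neg α) (neg β)).2.1]

lemma sd_mod_neg_neg {sat : V → F → Prop} {neg : F → F} {disj conj : F → F → F}
    (hA3 : assumpA3 sat neg disj conj) (α : F) :
    modSet sat {neg (neg α)} = modSet sat {α} := (hA3 α α).2.2.1

section WithRel

variable {sat : V → F → Prop} {neg : F → F} {rel : Set F → F → Prop}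

lemma sd_hPrev_subset_big (sat : V → F → Prop) (neg : F → F) (rel : Set F → F → Prop)
    (Γ : Set F) : ∀ n, hPrev sat neg rel Γ n ⊆ Γ ∪ relC rel Γ ∪ hSet sat neg rel Γ := by
  intro n
  induction n with
  | zero => exact fun x hx => Or.inl hx
  | succ n ih =>
    intro x hx
    rcases hx with hx | hx
    · exact ih hx
    · exact Or.inr (Set.mem_iUnion.2 ⟨n, hx⟩)

lemma sd_big_eq_iUnion (sat : V → F → Prop) (neg : F → F) (rel : Set F → F → Prop)
    (Γ : Set F) :
    Γ ∪ relC rel Γ ∪ hSet sat neg rel Γ = ⋃ n, hPrev sat neg rel Γ n := by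
  apply subset_antisymm
  · intro x hx
    rcases hx with hx | hx
    · exact Set.mem_iUnion.2 ⟨0, hx⟩
    · rcases Set.mem_iUnion.1 hx with ⟨n, hn⟩
      exact Set.mem_iUnion.2 ⟨n + 1, Or.inr hn⟩
  · intro x hx
    rcases Set.mem_iUnion.1 hx with ⟨n, hn⟩
    exact sd_hPrev_subset_big sat neg rel Γ n hn

lemma sd_mod_big (sat : V → F → Prop) (neg : F → F) (rel : Set F → F → Prop)
    (Γ : Set F) :
    modSet sat (Γ ∪ relC rel Γ ∪ hSet sat neg rel Γ) =
      ⋂ n, modSet sat (hPrev sat neg rel Γ n) := by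
  rw [sd_big_eq_iUnion, sd_modSet_iUnion]

lemma sd_hStep_congr {Γ B B' : Set F} (h : modSet sat B = modSet sat B') :
    hStep sat neg rel Γ B = hStep sat neg rel Γ B' := by
  unfold hStep
  rw [sd_cnsq_congr h]

lemma sd_Q_anti (sat : V → F → Prop) (neg : F → F) (rel : Set F → F → Prop)
    (Γ : Set F) : Antitone (fun n => modSet sat (hPrev sat neg rel Γ n)) :=
  antitone_nat_of_succ_le (fun _ => sd_modSet_anti Set.subset_union_left)

lemma sd_mod_hPrev_succ (sat : V → F → Prop) (neg : F → F) (rel : Set F → F → Prop)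
    (Γ : Set F) (n : ℕ) :
    modSet sat (hPrev sat neg rel Γ (n + 1)) =
      modSet sat (hPrev sat neg rel Γ n) ∩
        modSet sat (hStep sat neg rel Γ (hPrev sat neg rel Γ n)) :=
  sd_modSet_union sat _ _

lemma sd_stab [Finite V] (sat : V → F → Prop) (neg : F → F) (rel : Set F → F → Prop)
    (Γ : Set F) :
    ∃ n, modSet sat (hPrev sat neg rel Γ n) =
      modSet sat (Γ ∪ relC rel Γ ∪ hSet sat neg rel Γ) := by
  set Q : ℕ → Set V := fun n => modSet sat (hPrev sat neg rel Γ n) with hQ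
  have hanti : Antitone Q := sd_Q_anti sat neg rel Γ
  have key : ∀ a b : ℕ, a < b → Q a = Q b →
      modSet sat (hPrev sat neg rel Γ a) =
        modSet sat (Γ ∪ relC rel Γ ∪ hSet sat neg rel Γ) := by
    intro a b hab heq
    have h1 : Q (a + 1) = Q a :=
      subset_antisymm (hanti (Nat.le_succ a)) (heq ▸ hanti (Nat.succ_le_of_lt hab))
    have hconst : ∀ k, Q (a + k) = Q a := by
      intro k
      induction k with
      | zero => rfl
      | succ k ih =>
        have hcong : hStep sat neg rel Γ (hPrev sat neg rel Γ (a + k)) =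
            hStep sat neg rel Γ (hPrev sat neg rel Γ a) := sd_hStep_congr ih
        have e1 : Q (a + k + 1) = Q (a + k) ∩
            modSet sat (hStep sat neg rel Γ (hPrev sat neg rel Γ (a + k))) :=
          sd_mod_hPrev_succ sat neg rel Γ (a + k)
        have e2 : Q (a + 1) = Q a ∩
            modSet sat (hStep sat neg rel Γ (hPrev sat neg rel Γ a)) :=
          sd_mod_hPrev_succ sat neg rel Γ a
        show Q (a + k + 1) = Q a
        rw [e1, hcong, ih, ← e2, h1]
    rw [sd_mod_big]
    apply subset_antisymm
    · apply Set.subset_iInter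
      intro n
      rcases le_or_gt n a with h | h
      · exact hanti h
      · have : Q n = Q a := by
          have := hconst (n - a)
          rwa [Nat.add_sub_cancel' h.le] at this
        exact le_of_eq this.symm
    · exact Set.iInter_subset Q a
  obtain ⟨a, b, hab, heq⟩ := Finite.exists_ne_map_eq_of_infinite Q
  rcases hab.lt_or_gt with h | h
  · exact ⟨a, key a b h heq⟩
  · exact ⟨b, key b a h heq.symm⟩

lemma sd_fixpoint [Finite V] (sat : V → F → Prop) (neg : F → F) (rel : Set F → F → Prop)
    (Γ : Set F) {γ : F}
    (hγ : γ ∈ cnsq sat (Γ ∪ relC rel Γ ∪ hSet sat neg rel Γ)) (hr : ¬ rel Γ γ) :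
    neg γ ∈ cnsq sat (Γ ∪ relC rel Γ ∪ hSet sat neg rel Γ) := by
  obtain ⟨n, hn⟩ := sd_stab sat neg rel Γ
  have hc : cnsq sat (hPrev sat neg rel Γ n) =
      cnsq sat (Γ ∪ relC rel Γ ∪ hSet sat neg rel Γ) := sd_cnsq_congr hn
  have hγ' : γ ∈ cnsq sat (hPrev sat neg rel Γ n) := by rw [hc]; exact hγ
  by_cases hng : neg γ ∈ cnsq sat (hPrev sat neg rel Γ n)
  · rwa [hc] at hng
  · have hmem : neg γ ∈ hStep sat neg rel Γ (hPrev sat neg rel Γ n) :=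
      ⟨γ, rfl, hγ', hr, hng⟩
    show modSet sat _ ⊆ modSet sat {neg γ}
    intro v hv
    have hv' : v ∈ modSet sat (hPrev sat neg rel Γ (n + 1)) :=
      sd_modSet_anti (sd_hPrev_subset_big sat neg rel Γ (n + 1)) hv
    exact sd_mem_modSet_singleton.mpr (hv' (neg γ) (Or.inr hmem))

end WithRel

lemma sd_modSet_nil (sat : V → F → Prop) :
    modSet sat {x : F | x ∈ ([] : List F)} = Set.univ := by
  ext v; simp [modSet]

lemma sd_modSet_cons (sat : V → F → Prop) (x : F) (L : List F) :
    modSet sat {y | y ∈ x :: L} = modSet sat {x} ∩ modSet sat {y | y ∈ L} := by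
  rw [show {y | y ∈ x :: L} = ({x} : Set F) ∪ {y : F | y ∈ L} by
    ext y; simp [List.mem_cons], sd_modSet_union]

lemma sd_finite_extract [Finite V] (sat : V → F → Prop) (T : Set F) :
    ∃ L : List F, (∀ x ∈ L, x ∈ T) ∧ modSet sat {x | x ∈ L} = modSet sat T := by
  have hTs : ⋂₀ ((fun x => modSet sat {x}) '' T) = modSet sat T := by
    rw [Set.sInter_image]
    ext v
    simp [modSet]
  have key : ∀ s : Set (Set V), s.Finite → s ⊆ (fun x => modSet sat {x}) '' T →
      ∃ L : List F, (∀ x ∈ L, x ∈ T) ∧ modSet sat {x | x ∈ L} = ⋂₀ s := by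
    intro s hfin
    refine Set.Finite.induction_on (motive := fun s _ => s ⊆ (fun x => modSet sat {x}) '' T →
      ∃ L : List F, (∀ x ∈ L, x ∈ T) ∧ modSet sat {x | x ∈ L} = ⋂₀ s) s hfin ?_ ?_
    · intro _
      exact ⟨[], by simp, by rw [sd_modSet_nil, Set.sInter_empty]⟩
    · intro a s ha hfin ih hsub
      obtain ⟨L, hL, hLeq⟩ := ih ((Set.subset_insert a s).trans hsub)
      obtain ⟨x, hxT, hxa⟩ := hsub (Set.mem_insert a s)
      refine ⟨x :: L, ?_, ?_⟩
      · intro y hy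
        rcases List.mem_cons.1 hy with rfl | hy
        · exact hxT
        · exact hL y hy
      · rw [sd_modSet_cons, hLeq, Set.sInter_insert, show modSet sat {x} = a from hxa]
  obtain ⟨L, hL, hLeq⟩ :=
    key _ (Set.toFinite ((fun x => modSet sat {x}) '' T)) subset_rfl
  exact ⟨L, hL, by rw [hLeq, hTs]⟩

section WithRel2

variable {sat : V → F → Prop} {neg : F → F} {disj conj : F → F → F}
  {rel : Set F → F → Prop}

lemma sd_fold (hA3 : assumpA3 sat neg disj conj) (h7 : cond7 sat neg disj rel)
    (Γ : Set F) (Q : Set V) :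
    ∀ L : List F, (∀ x ∈ L, ∃ β, x = neg β ∧ Q ⊆ modSet sat {β} ∧ ¬ rel Γ β) →
    ∀ γ, γ ∈ cnsq sat (Γ ∪ relC rel Γ) → ¬ rel Γ γ →
      modSet sat (Γ ∪ relC rel Γ ∪ {neg γ}) ⊆ Q →
      ∃ γ', γ' ∈ cnsq sat (Γ ∪ relC rel Γ) ∧ ¬ rel Γ γ' ∧
        modSet sat (Γ ∪ relC rel Γ ∪ {neg γ'}) =
          modSet sat (Γ ∪ relC rel Γ ∪ {neg γ}) ∩ modSet sat {x | x ∈ L} := by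
  intro L
  induction L with
  | nil =>
    intro _ γ h1 h2 _
    exact ⟨γ, h1, h2, by rw [sd_modSet_nil, Set.inter_univ]⟩
  | cons x L ih =>
    intro hL γ h1 h2 h3
    obtain ⟨β, rfl, hQβ, hβn⟩ := hL x List.mem_cons_self
    have hkey : modSet sat (Γ ∪ relC rel Γ ∪ {neg (disj γ β)}) =
        modSet sat (Γ ∪ relC rel Γ ∪ {neg γ}) ∩ modSet sat {neg β} := by
      rw [sd_modSet_union sat (Γ ∪ relC rel Γ) {neg (disj γ β)},
        sd_modSet_union sat (Γ ∪ relC rel Γ) {neg γ}, sd_mod_neg_disj hA3,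
        ← Set.inter_assoc]
    have hγ'c : disj γ β ∈ cnsq sat (Γ ∪ relC rel Γ) := by
      rw [sd_mem_cnsq, sd_mod_disj hA3]
      exact (sd_mem_cnsq.1 h1).trans Set.subset_union_left
    have hβc : β ∈ cnsq sat (Γ ∪ relC rel Γ ∪ {neg γ}) :=
      sd_mem_cnsq.2 (h3.trans hQβ)
    have hγ'n : ¬ rel Γ (disj γ β) := h7 Γ γ β h1 h2 hβc hβn
    have h3' : modSet sat (Γ ∪ relC rel Γ ∪ {neg (disj γ β)}) ⊆ Q := by
      rw [hkey]
      exact Set.inter_subset_left.trans h3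
    obtain ⟨γ', hc1, hc2, hc3⟩ :=
      ih (fun y hy => hL y (List.mem_cons_of_mem _ hy)) (disj γ β) hγ'c hγ'n h3'
    refine ⟨γ', hc1, hc2, ?_⟩
    rw [hc3, hkey, sd_modSet_cons, ← Set.inter_assoc]

lemma sd_descent [Finite V] (hA3 : assumpA3 sat neg disj conj)
    (h7 : cond7 sat neg disj rel) (Γ : Set F) :
    ∀ n, modSet sat (hPrev sat neg rel Γ n) = modSet sat (Γ ∪ relC rel Γ) ∨
      ∃ β, β ∈ cnsq sat (Γ ∪ relC rel Γ) ∧ ¬ rel Γ β ∧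
        modSet sat (hPrev sat neg rel Γ n) = modSet sat (Γ ∪ relC rel Γ ∪ {neg β}) := by
  intro n
  induction n with
  | zero => exact Or.inl rfl
  | succ n ih =>
    obtain ⟨L, hLT, hLeq⟩ :=
      sd_finite_extract sat (hStep sat neg rel Γ (hPrev sat neg rel Γ n))
    have hQ1 : modSet sat (hPrev sat neg rel Γ (n + 1)) =
        modSet sat (hPrev sat neg rel Γ n) ∩ modSet sat {x | x ∈ L} := by
      rw [sd_mod_hPrev_succ, hLeq]
    have hLprop : ∀ x ∈ L, ∃ β, x = neg β ∧
        modSet sat (hPrev sat neg rel Γ n) ⊆ modSet sat {β} ∧ ¬ rel Γ β := by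
      intro x hx
      obtain ⟨β, hxβ, hβc, hβn, _⟩ := hLT x hx
      exact ⟨β, hxβ, sd_mem_cnsq.1 hβc, hβn⟩
    rcases ih with h | ⟨β, hβ1, hβ2, hβ3⟩
    · cases L with
      | nil =>
        left
        rw [hQ1, sd_modSet_nil, Set.inter_univ, h]
      | cons x L' =>
        obtain ⟨β₀, hx0, hQβ₀, hβ₀n⟩ := hLprop x List.mem_cons_self
        have hβ₀c : β₀ ∈ cnsq sat (Γ ∪ relC rel Γ) :=
          sd_mem_cnsq.2 (h ▸ hQβ₀)
        have hstart : modSet sat (Γ ∪ relC rel Γ ∪ {neg β₀}) ⊆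
            modSet sat (hPrev sat neg rel Γ n) := by
          rw [sd_modSet_union, h]
          exact Set.inter_subset_left
        obtain ⟨γ', hc1, hc2, hc3⟩ := sd_fold hA3 h7 Γ
          (modSet sat (hPrev sat neg rel Γ n)) L'
          (fun y hy => hLprop y (List.mem_cons_of_mem x hy)) β₀ hβ₀c hβ₀n hstart
        refine Or.inr ⟨γ', hc1, hc2, ?_⟩
        rw [hQ1, hc3, sd_modSet_cons, sd_modSet_union, ← h, hx0, ← Set.inter_assoc]
    · obtain ⟨γ', hc1, hc2, hc3⟩ := sd_fold hA3 h7 Γ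
        (modSet sat (hPrev sat neg rel Γ n)) L hLprop β hβ1 hβ2 (le_of_eq hβ3.symm)
      refine Or.inr ⟨γ', hc1, hc2, ?_⟩
      rw [hQ1, hc3, hβ3]

lemma sd_rep [Finite V] (hA3 : assumpA3 sat neg disj conj)
    (h6 : cond6 sat neg rel) (h7 : cond7 sat neg disj rel) (h8 : cond8 sat neg rel)
    (Γ : Set F) (α : F) :
    rel Γ α ↔ (α ∈ cnsq sat (Γ ∪ relC rel Γ ∪ hSet sat neg rel Γ) ∧
      neg α ∉ cnsq sat (Γ ∪ relC rel Γ ∪ hSet sat neg rel Γ)) := by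
  constructor
  · intro hr
    refine ⟨sd_mem_cnsq.2 (sd_modSet_anti (Set.singleton_subset_iff.2
      (Or.inl (Or.inr hr)))), ?_⟩
    intro hnα
    obtain ⟨n, hn⟩ := sd_stab sat neg rel Γ
    have hcn : cnsq sat (hPrev sat neg rel Γ n) =
        cnsq sat (Γ ∪ relC rel Γ ∪ hSet sat neg rel Γ) := sd_cnsq_congr hn
    rcases sd_descent hA3 h7 Γ n with h | ⟨β, hβ1, hβ2, hβ3⟩
    · have : neg α ∈ cnsq sat (Γ ∪ relC rel Γ) := by
        rw [← sd_cnsq_congr h, hcn]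
        exact hnα
      exact h8 Γ α hr this
    · have : neg α ∈ cnsq sat (Γ ∪ relC rel Γ ∪ {neg β}) := by
        rw [← sd_cnsq_congr hβ3, hcn]
        exact hnα
      exact h6 Γ α β hβ1 hβ2 this hr
  · rintro ⟨h1, h2⟩
    by_contra hnr
    exact h2 (sd_fixpoint sat neg rel Γ h1 hnr)

end WithRel2

end SDAux

/-- Under `(A3)` and `(A1)`, `|~` is a coherency preserving
pivotal-discriminative consequence relation iff it satisfies `(|~0)`, `(|~6)`, `(|~7)`,
`(|~8)`, `(|~10)`, and `(|~11)`. -/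
theorem stmt12 {F V : Type*} (neg : F → F) (disj conj : F → F → F)
    (sat : V → F → Prop)
    (hA3 : assumpA3 sat neg disj conj) (hA1 : Finite V)
    (rel : Set F → F → Prop) :
    (∃ μ : Set V → Set V,
        (∀ A ∈ defFam sat, μ A ⊆ A) ∧
        (∀ A ∈ defFam sat, ∀ B ∈ defFam sat, μ B ∩ A ⊆ μ A) ∧
        (∀ A ∈ defFam sat, A ∈ coFam sat neg → μ A ∈ coFam sat neg) ∧
        (∀ (Γ : Set F) (α : F), rel Γ α ↔
          (μ (modSet sat Γ) ⊆ modSet sat {α} ∧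
            ¬ μ (modSet sat Γ) ⊆ modSet sat {neg α}))) ↔
      (cond0 sat rel ∧ cond6 sat neg rel ∧ cond7 sat neg disj rel ∧
        cond8 sat neg rel ∧ cond10 sat neg rel ∧ cond11 sat neg rel) := by
  haveI := hA1
  constructor
  · rintro ⟨μ, hsub, hSC, hCP, hrep⟩
    have hMdef : ∀ Γ : Set F, modSet sat Γ ∈ defFam sat := fun Γ => ⟨Γ, rfl⟩
    have hmuP : ∀ (Δ : Set F) (n : ℕ),
        μ (modSet sat Δ) ⊆ modSet sat (hPrev sat neg rel Δ n) := by
      intro Δ n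
      induction n with
      | zero =>
        intro v hv β hβ
        rcases hβ with hβ | hβ
        · exact hsub _ (hMdef Δ) hv β hβ
        · exact sd_mem_modSet_singleton.1 (((hrep Δ β).1 hβ).1 hv)
      | succ n ih =>
        intro v hv β hβ
        rcases hβ with hβ | hβ
        · exact ih hv β hβ
        · obtain ⟨γ, rfl, hγc, hγn, -⟩ := hβ
          have h1 : μ (modSet sat Δ) ⊆ modSet sat {γ} := ih.trans (sd_mem_cnsq.1 hγc)
          have h2 : μ (modSet sat Δ) ⊆ modSet sat {neg γ} := by
            by_contra hc
            exact hγn ((hrep Δ γ).2 ⟨h1, hc⟩)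
          exact sd_mem_modSet_singleton.1 (h2 hv)
    have hmuBig : ∀ Δ : Set F, μ (modSet sat Δ) ⊆
        modSet sat (Δ ∪ relC rel Δ ∪ hSet sat neg rel Δ) := by
      intro Δ v hv
      rw [sd_mod_big]
      exact Set.mem_iInter.2 fun n => hmuP Δ n hv
    have hmuRH : ∀ Δ : Set F, μ (modSet sat Δ) ⊆
        modSet sat (relC rel Δ ∪ hSet sat neg rel Δ) := by
      intro Δ v hv β hβ
      refine hmuBig Δ hv β ?_
      rcases hβ with h | h
      · exact Or.inl (Or.inr h)
      · exact Or.inr h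
    refine ⟨?_, ?_, ?_, ?_, ?_, ?_⟩
    · -- cond0
      intro Γ Δ h
      have hmod : modSet sat Γ = modSet sat Δ := by
        rw [← sd_modSet_cnsq sat Γ, ← sd_modSet_cnsq sat Δ, h]
      ext β
      simp only [relC, Set.mem_setOf_eq, hrep, hmod]
    · -- cond6
      intro Γ α β hβ hβn hα hr
      have hμβ : μ (modSet sat Γ) ⊆ modSet sat {β} :=
        (hmuP Γ 0).trans (sd_mem_cnsq.1 hβ)
      have hμnβ : μ (modSet sat Γ) ⊆ modSet sat {neg β} := by
        by_contra hc
        exact hβn ((hrep Γ β).2 ⟨hμβ, hc⟩)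
      have hμ3 : μ (modSet sat Γ) ⊆ modSet sat (Γ ∪ relC rel Γ ∪ {neg β}) := by
        rw [sd_modSet_union sat (Γ ∪ relC rel Γ) {neg β}]
        exact Set.subset_inter (hmuP Γ 0) hμnβ
      exact ((hrep Γ α).1 hr).2 (hμ3.trans (sd_mem_cnsq.1 hα))
    · -- cond7
      intro Γ α β hαc hαn hβc hβn hr
      have hμα : μ (modSet sat Γ) ⊆ modSet sat {α} :=
        (hmuP Γ 0).trans (sd_mem_cnsq.1 hαc)
      have hμnα : μ (modSet sat Γ) ⊆ modSet sat {neg α} := by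
        by_contra hc
        exact hαn ((hrep Γ α).2 ⟨hμα, hc⟩)
      have hμ2 : μ (modSet sat Γ) ⊆ modSet sat (Γ ∪ relC rel Γ ∪ {neg α}) := by
        rw [sd_modSet_union sat (Γ ∪ relC rel Γ) {neg α}]
        exact Set.subset_inter (hmuP Γ 0) hμnα
      have hμβ : μ (modSet sat Γ) ⊆ modSet sat {β} := hμ2.trans (sd_mem_cnsq.1 hβc)
      have hμnβ : μ (modSet sat Γ) ⊆ modSet sat {neg β} := by
        by_contra hc
        exact hβn ((hrep Γ β).2 ⟨hμβ, hc⟩)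
      refine ((hrep Γ (disj α β)).1 hr).2 ?_
      rw [sd_mod_neg_disj hA3]
      exact Set.subset_inter hμnα hμnβ
    · -- cond8
      intro Γ α hα hcon
      exact ((hrep Γ α).1 hα).2 ((hmuP Γ 0).trans (sd_mem_cnsq.1 hcon))
    · -- cond10
      intro Γ hcons
      have hμco : μ (modSet sat Γ) ∈ coFam sat neg := hCP _ (hMdef Γ) hcons
      have hμrc : μ (modSet sat Γ) ⊆ modSet sat (relC rel Γ) :=
        (hmuP Γ 0).trans (sd_modSet_anti Set.subset_union_right)
      refine ⟨?_, ?_, ?_⟩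
      · intro β hb
        exact hμco β ⟨hμrc.trans hb.1, hμrc.trans hb.2⟩
      · intro γ hγ
        have h1 : μ (modSet sat Γ) ⊆ modSet sat {γ} :=
          (hsub _ (hMdef Γ)).trans (sd_modSet_anti (Set.singleton_subset_iff.2 hγ))
        exact (hrep Γ γ).2 ⟨h1, fun hc => hμco γ ⟨h1, hc⟩⟩
      · refine subset_antisymm ?_ (sd_subset_cnsq sat _)
        intro β hβ
        have h1 : μ (modSet sat Γ) ⊆ modSet sat {β} := hμrc.trans (sd_mem_cnsq.1 hβ)
        exact (hrep Γ β).2 ⟨h1, fun hc => hμco β ⟨h1, hc⟩⟩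
    · -- cond11
      intro Γ
      set N : Set V := {v | ∀ Δ : Set F, v ∈ modSet sat Δ →
        v ∈ modSet sat (relC rel Δ ∪ hSet sat neg rel Δ)} with hN
      have hsep : {v ∈ modSet sat Γ | ∀ Δ : Set F, v ∈ modSet sat Δ →
          v ∈ modSet sat (relC rel Δ ∪ hSet sat neg rel Δ)} = modSet sat Γ ∩ N := by
        ext v
        simp only [Set.mem_sep_iff, Set.mem_inter_iff, hN, Set.mem_setOf_eq]
      rw [hsep]
      have hMN_P : modSet sat Γ ∩ N ⊆
          modSet sat (Γ ∪ relC rel Γ ∪ hSet sat neg rel Γ) := by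
        rintro v ⟨hvM, hvN⟩ β hβ
        rcases hβ with (hβ | hβ) | hβ
        · exact hvM β hβ
        · exact hvN Γ hvM β (Or.inl hβ)
        · exact hvN Γ hvM β (Or.inr hβ)
      have hmuN : μ (modSet sat Γ) ⊆ N := by
        intro v hv Δ hvΔ
        exact hmuRH Δ (hSC _ (hMdef Δ) _ (hMdef Γ) ⟨hv, hvΔ⟩)
      have hmMN : μ (modSet sat Γ) ⊆ modSet sat Γ ∩ N :=
        fun v hv => ⟨hsub _ (hMdef Γ) hv, hmuN hv⟩
      apply subset_antisymm
      · intro β hβ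
        exact sd_mem_thSet.2 (hMN_P.trans (sd_mem_cnsq.1 hβ))
      · intro α hα
        have hmα : μ (modSet sat Γ) ⊆ modSet sat {α} := hmMN.trans (sd_mem_thSet.1 hα)
        by_contra hnX
        have hnrel : ¬ rel Γ α := fun hr => hnX (sd_mem_cnsq.2 (sd_modSet_anti
          (Set.singleton_subset_iff.2 (Or.inl (Or.inr hr)))))
        have hmnα : μ (modSet sat Γ) ⊆ modSet sat {neg α} := by
          by_contra hc
          exact hnrel ((hrep Γ α).2 ⟨hmα, hc⟩)
        by_cases hex : ∃ x, x ∈ cnsq sat (Γ ∪ relC rel Γ ∪ hSet sat neg rel Γ) ∧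
            μ (modSet sat Γ) ⊆ modSet sat {neg x}
        · obtain ⟨x, hxX, hxneg⟩ := hex
          have hγX : disj x (neg α) ∈
              cnsq sat (Γ ∪ relC rel Γ ∪ hSet sat neg rel Γ) := by
            rw [sd_mem_cnsq, sd_mod_disj hA3]
            exact (sd_mem_cnsq.1 hxX).trans Set.subset_union_left
          have hmodng : modSet sat {neg (disj x (neg α))} =
              modSet sat {neg x} ∩ modSet sat {α} := by
            rw [sd_mod_neg_disj hA3, sd_mod_neg_neg hA3]
          have hγn : ¬ rel Γ (disj x (neg α)) := by
            intro hr
            refine ((hrep Γ _).1 hr).2 ?_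
            rw [hmodng]
            exact Set.subset_inter hxneg hmα
          have hngX := sd_fixpoint sat neg rel Γ hγX hγn
          apply hnX
          rw [sd_mem_cnsq]
          refine (sd_mem_cnsq.1 hngX).trans ?_
          rw [hmodng]
          exact Set.inter_subset_right
        · push_neg at hex
          by_cases hP : modSet sat (Γ ∪ relC rel Γ ∪ hSet sat neg rel Γ) ∈
              coFam sat neg
          · have hPD : modSet sat (Γ ∪ relC rel Γ ∪ hSet sat neg rel Γ) ∈
                defFam sat := ⟨_, rfl⟩
            have hμPco := hCP _ hPD hP
            have hPM : modSet sat (Γ ∪ relC rel Γ ∪ hSet sat neg rel Γ) ⊆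
                modSet sat Γ := sd_modSet_anti (fun β hβ => Or.inl (Or.inl hβ))
            have h1 : μ (modSet sat (Γ ∪ relC rel Γ ∪ hSet sat neg rel Γ)) ⊆
                μ (modSet sat Γ) :=
              fun v hv => hSC _ (hMdef Γ) _ hPD ⟨hv, hPM (hsub _ hPD hv)⟩
            exact hμPco α ⟨h1.trans hmα, h1.trans hmnα⟩
          · simp only [coFam, Set.mem_setOf_eq, not_forall, not_not] at hP
            obtain ⟨φ, hφ1, hφ2⟩ := hP
            exact hex φ (sd_mem_cnsq.2 hφ1) ((hmuBig Γ).trans hφ2)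
  · rintro ⟨h0, h6, h7, h8, h10, h11⟩
    set N : Set V := {v | ∀ Δ : Set F, v ∈ modSet sat Δ →
      v ∈ modSet sat (relC rel Δ ∪ hSet sat neg rel Δ)} with hN
    have hsep : ∀ Γ : Set F, {v ∈ modSet sat Γ | ∀ Δ : Set F, v ∈ modSet sat Δ →
        v ∈ modSet sat (relC rel Δ ∪ hSet sat neg rel Δ)} = modSet sat Γ ∩ N := by
      intro Γ
      ext v
      simp only [Set.mem_sep_iff, Set.mem_inter_iff, hN, Set.mem_setOf_eq]
    have h11' : ∀ Γ : Set F, cnsq sat (Γ ∪ relC rel Γ ∪ hSet sat neg rel Γ) =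
        thSet sat (modSet sat Γ ∩ N) := fun Γ => (h11 Γ).trans (by rw [hsep Γ])
    refine ⟨fun A => A ∩ N, fun A _ => Set.inter_subset_left, ?_, ?_, ?_⟩
    · intro A _ B _ v hv
      exact ⟨hv.2, hv.1.2⟩
    · rintro A ⟨Γ₀, rfl⟩ hAco
      obtain ⟨hcR, hsubR, hfixR⟩ := h10 Γ₀ hAco
      have hu : Γ₀ ∪ relC rel Γ₀ = relC rel Γ₀ :=
        Set.union_eq_self_of_subset_left hsubR
      have hstep0 : hStep sat neg rel Γ₀ (Γ₀ ∪ relC rel Γ₀) = ∅ := by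
        ext x
        simp only [Set.mem_empty_iff_false, iff_false]
        rintro ⟨β, rfl, hβc, hβn, -⟩
        apply hβn
        rw [hu] at hβc
        rw [← hfixR]
        exact hβc
      have hP0 : ∀ n, hPrev sat neg rel Γ₀ n = Γ₀ ∪ relC rel Γ₀ := by
        intro n
        induction n with
        | zero => rfl
        | succ n ih =>
          show hPrev sat neg rel Γ₀ n ∪
              hStep sat neg rel Γ₀ (hPrev sat neg rel Γ₀ n) = Γ₀ ∪ relC rel Γ₀
          rw [ih, hstep0, Set.union_empty]
      have hHempty : hSet sat neg rel Γ₀ = ∅ := by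
        refine Set.eq_empty_iff_forall_notMem.2 fun x hx => ?_
        rcases Set.mem_iUnion.1 hx with ⟨n, hn⟩
        rw [hP0 n, hstep0] at hn
        exact hn
      have hXeq : cnsq sat (Γ₀ ∪ relC rel Γ₀ ∪ hSet sat neg rel Γ₀) =
          relC rel Γ₀ := by
        rw [hHempty, Set.union_empty, hu, hfixR]
      intro β hb
      have hb1 : β ∈ relC rel Γ₀ := by
        rw [← hXeq, h11' Γ₀]
        exact hb.1
      have hb2 : neg β ∈ relC rel Γ₀ := by
        rw [← hXeq, h11' Γ₀]
        exact hb.2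
      exact hcR β ⟨sd_modSet_anti (Set.singleton_subset_iff.2 hb1),
        sd_modSet_anti (Set.singleton_subset_iff.2 hb2)⟩
    · intro Γ α
      rw [sd_rep hA3 h6 h7 h8 Γ α, h11' Γ]
      exact Iff.rfl
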